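/- For every complex irreducible character χ of S_n (n ≥ 4) and every element g of cycle type (2,2,1^{n-4}), the identity χ(g)/χ(1) + (4/(n-3))·χ(c₃)/χ(1) − (n(n-1)/((n-2)(n-3)))·(χ(t)/χ(1))² + 2/((n-2)(n-3)) = 0 holds, where t is a transposition and c₃ is a 3-cycle. -/

import Mathlib

open CategoryTheory Equiv Equiv.Perm Finset

noncomputable section

namespace Stmt5Aux

lemma char_eq_of_cycleType {n : ℕ} (V : FDRep ℂ (Equiv.Perm (Fin n)))
    {σ τ : Equiv.Perm (Fin n)} (h : σ.cycleType = τ.cycleType) :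
    V.character σ = V.character τ := by
  obtain ⟨g, hg⟩ := isConj_iff.mp (Equiv.Perm.isConj_iff_cycleType_eq.mpr h)
  rw [← hg, FDRep.char_conj]

lemma cycleType_swap' {α : Type*} [DecidableEq α] [Fintype α] {x y : α} (h : x ≠ y) :
    (swap x y).cycleType = {2} := by
  rw [(isCycle_swap h).cycleType, card_support_swap h]

lemma cycleType_disjoint_swaps {α : Type*} [DecidableEq α] [Fintype α] {x y z w : α}
    (hxy : x ≠ y) (hzw : z ≠ w) (hzx : z ≠ x) (hzy : z ≠ y) (hwx : w ≠ x) (hwy : w ≠ y) :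
    (swap x y * swap z w).cycleType = {2, 2} := by
  have hd : Equiv.Perm.Disjoint (swap x y) (swap z w) :=
    Equiv.Perm.disjoint_iff_disjoint_support.mpr (by
      simp [support_swap hxy, support_swap hzw, Finset.disjoint_left]
      tauto)
  rw [hd.cycleType_mul, (isCycle_swap hxy).cycleType, (isCycle_swap hzw).cycleType,
    card_support_swap hxy, card_support_swap hzw]
  rfl

lemma cycleType_one_common {α : Type*} [DecidableEq α] [Fintype α] {x y z w : α}
    (hxy : x ≠ y) (hzw : z ≠ w)
    (h0 : ¬(z = x ∨ z = y) ∨ ¬(w = x ∨ w = y))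
    (h2 : (z = x ∨ z = y) ∨ (w = x ∨ w = y)) :
    (swap x y * swap z w).cycleType = {3} := by
  have three : ∀ a b c : α, a ≠ b → a ≠ c → b ≠ c →
      (swap a b * swap a c).cycleType = {3} := fun a b c h1 h2 h3 =>
    (isThreeCycle_swap_mul_swap_same h1 h2 h3).cycleType
  rcases h2 with (hz | hz) | (hw | hw)
  · subst hz
    have hwy : w ≠ y := by rintro rfl; tauto
    exact three z y w hxy hzw hwy.symm
  · subst hz
    have hwx : w ≠ x := by rintro rfl; tauto
    rw [swap_comm x z]
    exact three z x w hxy.symm hzw hwx.symm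
  · subst hw
    have hzy : z ≠ y := by rintro rfl; tauto
    rw [swap_comm z w]
    exact three w y z hxy (Ne.symm hzw) hzy.symm
  · subst hw
    have hzx : z ≠ x := by rintro rfl; tauto
    rw [swap_comm x w, swap_comm z w]
    exact three w x z hxy.symm hzw.symm hzx.symm

end Stmt5Aux

open Stmt5Aux

set_option maxHeartbeats 2000000 in
theorem stmt5 (n : ℕ) (hn : 4 ≤ n) (V : FDRep ℂ (Equiv.Perm (Fin n)))
    [CategoryTheory.Simple V]
    (t c g : Equiv.Perm (Fin n)) (ht : t.cycleType = {2}) (hc : c.cycleType = {3})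
    (hg : g.cycleType = {2, 2}) :
    V.character g / V.character 1
      + (4 / ((n : ℂ) - 3)) * (V.character c / V.character 1)
      - ((n : ℂ) * ((n : ℂ) - 1) / (((n : ℂ) - 2) * ((n : ℂ) - 3))) *
          (V.character t / V.character 1) ^ 2
      + 2 / (((n : ℂ) - 2) * ((n : ℂ) - 3)) = 0 := by
  classical
  obtain ⟨m, hm⟩ : ∃ m, n = m + 4 := ⟨n - 4, by omega⟩
  have hnc : (n : ℂ) = (m : ℂ) + 4 := by rw [hm]; push_cast; ring
  -- the class sum operator
  set S : Finset (Fin n × Fin n) := Finset.univ.offDiag with hS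
  set f : V →ₗ[ℂ] V := ∑ p ∈ S, V.ρ (swap p.1 p.2) with hf
  have hcomm : ∀ σ : Equiv.Perm (Fin n), f * V.ρ σ = V.ρ σ * f := by
    intro σ
    rw [hf, Finset.sum_mul, Finset.mul_sum]
    refine Finset.sum_equiv (Equiv.prodCongr σ⁻¹ σ⁻¹) (fun p => ?_) (fun p hp => ?_)
    · simp only [Finset.mem_offDiag, Finset.mem_univ, true_and, hS, Equiv.prodCongr_apply,
        Prod.map]
      constructor
      · intro h hh; exact h (σ⁻¹.injective hh)
      · intro h hh; exact h (congrArg (⇑σ⁻¹) hh)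
    · simp only [Equiv.prodCongr_apply, Prod.map]
      rw [← map_mul, ← map_mul, swap_apply_apply]
      group
  let F : V ⟶ V := ⟨FGModuleCat.ofHom f, fun σ => by
    ext v
    exact (LinearMap.congr_fun (hcomm σ) v)⟩
  obtain ⟨μ, hμ⟩ := CategoryTheory.endomorphism_simple_eq_smul_id (𝕜 := ℂ) F
  have hfμ : f = μ • LinearMap.id := (congrArg (fun φ : V ⟶ V => φ.hom.hom.hom) hμ).symm
  -- nonvanishing of the degree
  have hfr : Module.finrank ℂ V ≠ 0 := by
    intro h
    have hsub : Subsingleton V := Module.finrank_zero_iff.mp h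
    apply CategoryTheory.id_nonzero V
    ext v
    exact @Subsingleton.elim _ hsub _ _
  have hχ1 : V.character 1 ≠ 0 := by
    rw [FDRep.char_one]
    exact_mod_cast Nat.cast_ne_zero.mpr hfr
  -- cardinality of S
  have hScard : (S.card : ℂ) = (n : ℂ) * (n : ℂ) - (n : ℂ) := by
    rw [hS, Finset.offDiag_card, Finset.card_univ, Fintype.card_fin]
    have h1 : n ≤ n * n := Nat.le_mul_of_pos_left n (by omega)
    push_cast [Nat.cast_sub h1]
    ring
  -- first trace identity
  have hE1 : (S.card : ℂ) * V.character t = μ * V.character 1 := by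
    have h1 := congrArg (LinearMap.trace ℂ V) hfμ
    rw [hf, map_sum, map_smul, LinearMap.trace_id] at h1
    have h2 : ∀ p ∈ S, LinearMap.trace ℂ V (V.ρ (swap p.1 p.2)) = V.character t := by
      intro p hp
      have hne : p.1 ≠ p.2 := (Finset.mem_offDiag.mp hp).2.2
      exact char_eq_of_cycleType V ((cycleType_swap' hne).trans ht.symm)
    rw [Finset.sum_congr rfl h2, Finset.sum_const, nsmul_eq_mul] at h1
    rw [h1, FDRep.char_one, smul_eq_mul]
  -- the key combinatorial inner sum
  have key : ∀ x y : Fin n, x ≠ y →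
      ∑ q ∈ S, V.character (swap x y * swap q.1 q.2)
        = 2 * V.character 1 + (4 * ((n : ℂ) - 2)) * V.character c
          + (((n : ℂ) - 2) * ((n : ℂ) - 3)) * V.character g := by
    intro x y hxy
    set P0 : Fin n × Fin n → Prop := fun q => (q.1 = x ∨ q.1 = y) ∧ (q.2 = x ∨ q.2 = y)
      with hP0
    set P2 : Fin n × Fin n → Prop := fun q => ¬(q.1 = x ∨ q.1 = y) ∧ ¬(q.2 = x ∨ q.2 = y)
      with hP2
    have hsplit1 : ∑ q ∈ S, V.character (swap x y * swap q.1 q.2)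
        = ∑ q ∈ S.filter P0, V.character (swap x y * swap q.1 q.2)
          + ∑ q ∈ S.filter (fun q => ¬ P0 q), V.character (swap x y * swap q.1 q.2) :=
      (Finset.sum_filter_add_sum_filter_not S P0 _).symm
    have hsplit2 : ∑ q ∈ S.filter (fun q => ¬ P0 q), V.character (swap x y * swap q.1 q.2)
        = ∑ q ∈ (S.filter (fun q => ¬ P0 q)).filter P2,
            V.character (swap x y * swap q.1 q.2)
          + ∑ q ∈ (S.filter (fun q => ¬ P0 q)).filter (fun q => ¬ P2 q),
            V.character (swap x y * swap q.1 q.2) :=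
      (Finset.sum_filter_add_sum_filter_not _ P2 _).symm
    -- the P0 part
    have hA : S.filter P0 = {(x, y), (y, x)} := by
      ext q
      simp only [Finset.mem_filter, hS, Finset.mem_offDiag, Finset.mem_univ, true_and,
        Finset.mem_insert, Finset.mem_singleton, hP0]
      constructor
      · rintro ⟨hne, (h1 | h1), (h2 | h2)⟩
        · exact absurd (h1.trans h2.symm) hne
        · left; exact Prod.ext h1 h2
        · right; exact Prod.ext h1 h2
        · exact absurd (h1.trans h2.symm) hne
      · rintro (rfl | rfl)
        · exact ⟨hxy, Or.inl rfl, Or.inr rfl⟩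
        · exact ⟨hxy.symm, Or.inr rfl, Or.inl rfl⟩
    have hAsum : ∑ q ∈ S.filter P0, V.character (swap x y * swap q.1 q.2)
        = 2 * V.character 1 := by
      rw [hA, Finset.sum_insert (by simp [Prod.ext_iff, hxy]), Finset.sum_singleton]
      simp only
      rw [swap_mul_self, swap_comm y x, swap_mul_self]
      ring
    -- the P2 part
    have hBfil : (S.filter (fun q => ¬ P0 q)).filter P2 = S.filter P2 := by
      rw [Finset.filter_filter]
      apply Finset.filter_congr
      intro q hq
      simp only [hP0, hP2]
      tauto
    have hBset : S.filter P2 = (({x, y} : Finset (Fin n))ᶜ).offDiag := by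
      ext q
      simp only [Finset.mem_filter, hS, Finset.mem_offDiag, Finset.mem_univ, true_and,
        Finset.mem_compl, Finset.mem_insert, Finset.mem_singleton, hP2]
      tauto
    have hBcard : ((S.filter P2).card : ℂ) = ((n : ℂ) - 2) * ((n : ℂ) - 3) := by
      rw [hBset, Finset.offDiag_card]
      have hc2 : ({x, y} : Finset (Fin n))ᶜ.card = m + 2 := by
        rw [Finset.card_compl, Finset.card_insert_of_notMem (by simpa using hxy),
          Finset.card_singleton, Fintype.card_fin]
        omega
      rw [hc2]
      have : (m + 2) * (m + 2) - (m + 2) = (m + 2) * (m + 1) := by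
        have h1 : (m + 2) * (m + 2) = (m + 2) * (m + 1) + (m + 2) := by ring
        omega
      rw [this, hnc]
      push_cast
      ring
    have hBsum : ∑ q ∈ (S.filter (fun q => ¬ P0 q)).filter P2,
          V.character (swap x y * swap q.1 q.2)
        = (((n : ℂ) - 2) * ((n : ℂ) - 3)) * V.character g := by
      rw [hBfil]
      have hcst : ∀ q ∈ S.filter P2, V.character (swap x y * swap q.1 q.2)
          = V.character g := by
        intro q hq
        simp only [Finset.mem_filter, hS, Finset.mem_offDiag, Finset.mem_univ, true_and,
          hP2] at hq
        have hne : q.1 ≠ q.2 := by tauto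
        have a1 : q.1 ≠ x := by tauto
        have a2 : q.1 ≠ y := by tauto
        have a3 : q.2 ≠ x := by tauto
        have a4 : q.2 ≠ y := by tauto
        exact char_eq_of_cycleType V
          ((cycleType_disjoint_swaps hxy hne a1 a2 a3 a4).trans hg.symm)
      rw [Finset.sum_congr rfl hcst, Finset.sum_const, nsmul_eq_mul, hBcard]
    -- the remaining (one common point) part
    have hCsum : ∑ q ∈ (S.filter (fun q => ¬ P0 q)).filter (fun q => ¬ P2 q),
          V.character (swap x y * swap q.1 q.2)
        = (((S.filter (fun q => ¬ P0 q)).filter (fun q => ¬ P2 q)).card : ℂ)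
            * V.character c := by
      have hcst : ∀ q ∈ (S.filter (fun q => ¬ P0 q)).filter (fun q => ¬ P2 q),
          V.character (swap x y * swap q.1 q.2) = V.character c := by
        intro q hq
        simp only [Finset.mem_filter, hS, Finset.mem_offDiag, Finset.mem_univ, true_and,
          hP0, hP2] at hq
        have hne : q.1 ≠ q.2 := by tauto
        have h0 : ¬(q.1 = x ∨ q.1 = y) ∨ ¬(q.2 = x ∨ q.2 = y) := by tauto
        have h2 : (q.1 = x ∨ q.1 = y) ∨ (q.2 = x ∨ q.2 = y) := by tauto
        exact char_eq_of_cycleType V ((cycleType_one_common hxy hne h0 h2).trans hc.symm)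
      rw [Finset.sum_congr rfl hcst, Finset.sum_const, nsmul_eq_mul]
    -- cardinality of the remaining part
    have hCcard : ((((S.filter (fun q => ¬ P0 q)).filter (fun q => ¬ P2 q)).card : ℕ) : ℂ)
        = 4 * ((n : ℂ) - 2) := by
      have e1 : (S.filter P0).card + (S.filter (fun q => ¬ P0 q)).card = S.card :=
        Finset.card_filter_add_card_filter_not P0
      have e2 : ((S.filter (fun q => ¬ P0 q)).filter P2).card
          + ((S.filter (fun q => ¬ P0 q)).filter (fun q => ¬ P2 q)).card
          = (S.filter (fun q => ¬ P0 q)).card :=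
        Finset.card_filter_add_card_filter_not P2
      have e3 : (S.filter P0).card = 2 := by
        rw [hA, Finset.card_insert_of_notMem (by simp [Prod.ext_iff, hxy]),
          Finset.card_singleton]
      have e4 : ((S.filter (fun q => ¬ P0 q)).filter P2).card = (m + 2) * (m + 1) := by
        rw [hBfil, hBset, Finset.offDiag_card]
        have hc2 : ({x, y} : Finset (Fin n))ᶜ.card = m + 2 := by
          rw [Finset.card_compl, Finset.card_insert_of_notMem (by simpa using hxy),
            Finset.card_singleton, Fintype.card_fin]
          omega
        rw [hc2]
        have h1 : (m + 2) * (m + 2) = (m + 2) * (m + 1) + (m + 2) := by ring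
        omega
      have e5 : S.card = n * n - n := by
        rw [hS, Finset.offDiag_card, Finset.card_univ, Fintype.card_fin]
      have e5' : n * n - n = (m + 4) * (m + 4) - (m + 4) := by rw [hm]
      have e6 : ((S.filter (fun q => ¬ P0 q)).filter (fun q => ¬ P2 q)).card
          = 4 * m + 8 := by
        have h1 : (m + 4) * (m + 4) = (m + 2) * (m + 1) + 4 * m + 8 + 2 + (m + 4) := by
          ring
        omega
      rw [e6, hnc]
      push_cast
      ring
    rw [hsplit1, hsplit2, hAsum, hBsum, hCsum, hCcard]
    ring
  -- second trace identity
  have hE2 : (S.card : ℂ) * (2 * V.character 1 + (4 * ((n : ℂ) - 2)) * V.character c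
        + (((n : ℂ) - 2) * ((n : ℂ) - 3)) * V.character g)
      = μ ^ 2 * V.character 1 := by
    have h1 : LinearMap.trace ℂ V (f * f) = μ ^ 2 * V.character 1 := by
      rw [hfμ]
      have : (μ • LinearMap.id : V →ₗ[ℂ] V) * (μ • LinearMap.id)
          = (μ * μ) • LinearMap.id := by
        rw [smul_mul_smul_comm, Module.End.mul_eq_comp, LinearMap.id_comp]
      rw [this, map_smul, LinearMap.trace_id, FDRep.char_one, smul_eq_mul]
      ring
    have h2 : LinearMap.trace ℂ V (f * f)
        = ∑ p ∈ S, ∑ q ∈ S, V.character (swap p.1 p.2 * swap q.1 q.2) := by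
      rw [hf, Finset.sum_mul_sum]
      rw [map_sum]
      refine Finset.sum_congr rfl fun p hp => ?_
      rw [map_sum]
      refine Finset.sum_congr rfl fun q hq => ?_
      rw [← map_mul]
      rfl
    have h3 : ∑ p ∈ S, ∑ q ∈ S, V.character (swap p.1 p.2 * swap q.1 q.2)
        = (S.card : ℂ) * (2 * V.character 1 + (4 * ((n : ℂ) - 2)) * V.character c
          + (((n : ℂ) - 2) * ((n : ℂ) - 3)) * V.character g) := by
      have := fun p (hp : p ∈ S) =>
        key p.1 p.2 (Finset.mem_offDiag.mp (hS ▸ hp)).2.2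
      rw [Finset.sum_congr rfl this, Finset.sum_const, nsmul_eq_mul]
    rw [← h3, ← h2, h1]
  -- final algebra
  have hN : (S.card : ℂ) ≠ 0 := by
    rw [hScard]
    rw [hnc]
    intro h
    have hm : (m : ℂ) * (m : ℂ) + 7 * (m : ℂ) + 12 = 0 := by linear_combination h
    have : ((m * m + 7 * m + 12 : ℕ) : ℂ) = 0 := by push_cast; linear_combination hm
    have := Nat.cast_eq_zero.mp this
    omega
  have master : V.character 1 * (2 * V.character 1 + (4 * ((n : ℂ) - 2)) * V.character c
        + (((n : ℂ) - 2) * ((n : ℂ) - 3)) * V.character g)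
      = (S.card : ℂ) * V.character t ^ 2 := by
    have master' : (S.card : ℂ) * (V.character 1 * (2 * V.character 1
          + (4 * ((n : ℂ) - 2)) * V.character c
          + (((n : ℂ) - 2) * ((n : ℂ) - 3)) * V.character g))
        = (S.card : ℂ) * ((S.card : ℂ) * V.character t ^ 2) := by
      linear_combination V.character 1 * hE2
        - (μ * V.character 1 + (S.card : ℂ) * V.character t) * hE1
    exact mul_left_cancel₀ hN master'
  have h2ne : (n : ℂ) - 2 ≠ 0 := by
    have : (n : ℂ) - 2 = ((m + 2 : ℕ) : ℂ) := by rw [hnc]; push_cast; ring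
    rw [this]
    exact Nat.cast_ne_zero.mpr (by omega)
  have h3ne : (n : ℂ) - 3 ≠ 0 := by
    have : (n : ℂ) - 3 = ((m + 1 : ℕ) : ℂ) := by rw [hnc]; push_cast; ring
    rw [this]
    exact Nat.cast_ne_zero.mpr (by omega)
  rw [hScard] at master
  set x1 := V.character 1
  set xc := V.character c
  set xg := V.character g
  set xt := V.character t
  set N := (n : ℂ)
  have hD : x1 ^ 2 * ((N - 2) * (N - 3)) ≠ 0 :=
    mul_ne_zero (pow_ne_zero _ hχ1) (mul_ne_zero h2ne h3ne)
  have e1 : xg / x1 = ((N - 2) * (N - 3) * x1 * xg) / (x1 ^ 2 * ((N - 2) * (N - 3))) := by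
    rw [div_eq_div_iff hχ1 hD]; ring
  have e2 : (4 / (N - 3)) * (xc / x1)
      = (4 * (N - 2) * x1 * xc) / (x1 ^ 2 * ((N - 2) * (N - 3))) := by
    rw [div_mul_div_comm, div_eq_div_iff (mul_ne_zero h3ne hχ1) hD]; ring
  have e3 : (N * (N - 1) / ((N - 2) * (N - 3))) * (xt / x1) ^ 2
      = (N * (N - 1) * xt ^ 2) / (x1 ^ 2 * ((N - 2) * (N - 3))) := by
    rw [div_pow, div_mul_div_comm, div_eq_div_iff (mul_ne_zero (mul_ne_zero h2ne h3ne)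
      (pow_ne_zero _ hχ1)) hD]; ring
  have e4 : 2 / ((N - 2) * (N - 3)) = (2 * x1 ^ 2) / (x1 ^ 2 * ((N - 2) * (N - 3))) := by
    rw [div_eq_div_iff (mul_ne_zero h2ne h3ne) hD]; ring
  rw [e1, e2, e3, e4, ← add_div, div_sub_div_same, ← add_div,
    div_eq_zero_iff]
  left
  linear_combination master
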